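/- Let $(a_n)_{n\ge1}$ be complex numbers, $\alpha,\beta,x$ real with $\alpha\ne0$, such that the series $f_1(x)=\sum_{n=1}^\infty a_n e^{i(\alpha n+\beta)x}$ converges, and let $r_1,\dots,r_p$ be complex numbers with $r_je^{i\alpha x}\ne1$ for $j=1,\dots,p$. Then the series $\sum_{n=1}^\infty L_{r_1\dots r_p}(a_n)e^{i(\alpha(n+p)+\beta)x}$ converges and $f_1(x)=\frac{a_1e^{i(\alpha+\beta)x}}{1-r_1e^{i\alpha x}} + \sum_{k=1}^{p-1}L_{r_1\dots r_k}(a_1)\frac{e^{i(\alpha(k+1)+\beta)x}}{(1-r_1e^{i\alpha x})\cdots(1-r_{k+1}e^{i\alpha x})} + \frac{1}{(1-r_1e^{i\alpha x})\cdots(1-r_pe^{i\alpha x})}\sum_{n=1}^\infty L_{r_1\dots r_p}(a_n)e^{i(\alpha(n+p)+\beta)x}.$ -/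

import Mathlib

open Filter Finset

/-- `Lop r p a n = L_{r_1 … r_p}(a_n)`. -/
noncomputable def Lop (r : ℕ → ℂ) : ℕ → (ℕ → ℂ) → ℕ → ℂ
  | 0 => fun a n => a n
  | p + 1 => fun a n => Lop r p a (n + 1) - r (p + 1) * Lop r p a n

lemma one_step (u : ℕ → ℂ) (ρ T : ℂ)
    (hT : Tendsto (fun N => ∑ n ∈ range N, u n) atTop (nhds T)) :
    Tendsto (fun N => ∑ n ∈ range N, (u (n+1) - ρ * u n)) atTop
      (nhds ((1 - ρ) * T - u 0)) := by
  have h1 : Tendsto (fun N => ∑ n ∈ range (N+1), u n) atTop (nhds T) :=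
    hT.comp (tendsto_add_atTop_nat 1)
  have h2 : Tendsto (fun N => ((∑ n ∈ range (N+1), u n) - u 0) - ρ * ∑ n ∈ range N, u n)
      atTop (nhds ((T - u 0) - ρ * T)) :=
    (h1.sub tendsto_const_nhds).sub (hT.const_mul ρ)
  have heq : ∀ N, ∑ n ∈ range N, (u (n+1) - ρ * u n)
      = ((∑ n ∈ range (N+1), u n) - u 0) - ρ * ∑ n ∈ range N, u n := by
    intro N
    rw [Finset.sum_sub_distrib, ← Finset.mul_sum, Finset.sum_range_succ']
    ring
  have : ((T - u 0) - ρ * T) = (1 - ρ) * T - u 0 := by ring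
  rw [← this]
  exact h2.congr (fun N => (heq N).symm)

lemma key (a : ℕ → ℂ) (e c : ℂ) (r : ℕ → ℂ) (p : ℕ)
    (hr : ∀ j, 1 ≤ j → j ≤ p → r j * e ≠ 1) (S : ℂ)
    (hS : Tendsto (fun N => ∑ n ∈ range N, a (n+1) * e^(n+1) * c) atTop (nhds S)) :
    ∃ T, Tendsto (fun N => ∑ n ∈ range N, Lop r p a (n+1) * e^(n+1+p) * c) atTop (nhds T) ∧
      S = (∑ k ∈ range p, Lop r k a 1 * e^(k+1) * c /
            ∏ j ∈ Finset.Icc 1 (k+1), (1 - r j * e))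
        + (∏ j ∈ Finset.Icc 1 p, (1 - r j * e))⁻¹ * T := by
  induction p with
  | zero =>
    refine ⟨S, by simpa [Lop] using hS, by simp⟩
  | succ p ih =>
    obtain ⟨T, hT, hST⟩ := ih (fun j h1 h2 => hr j h1 (h2.trans (Nat.le_succ p)))
    set u : ℕ → ℂ := fun n => Lop r p a (n+1) * e^(n+1+p) * c with hu
    have h1 := one_step u (r (p+1) * e) T hT
    refine ⟨(1 - r (p+1) * e) * T - u 0, ?_, ?_⟩
    · refine h1.congr (fun N => Finset.sum_congr rfl fun n _ => ?_)
      simp only [hu, Lop]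
      ring
    · have hne : ∀ j ∈ Finset.Icc 1 (p+1), (1 - r j * e) ≠ 0 := by
        intro j hj
        rw [Finset.mem_Icc] at hj
        exact sub_ne_zero.mpr (Ne.symm (hr j hj.1 hj.2))
      have hPp : (∏ j ∈ Finset.Icc 1 p, (1 - r j * e)) ≠ 0 :=
        Finset.prod_ne_zero_iff.mpr (fun j hj => hne j
          (Finset.mem_Icc.mpr ⟨(Finset.mem_Icc.mp hj).1, ((Finset.mem_Icc.mp hj).2).trans (Nat.le_succ p)⟩))
      have hlast : (1 - r (p+1) * e) ≠ 0 := hne (p+1) (Finset.mem_Icc.mpr ⟨Nat.le_add_left 1 p, le_rfl⟩)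
      have hprod : (∏ j ∈ Finset.Icc 1 (p+1), (1 - r j * e))
          = (∏ j ∈ Finset.Icc 1 p, (1 - r j * e)) * (1 - r (p+1) * e) :=
        Finset.prod_Icc_succ_top (Nat.le_add_left 1 p) _
      rw [hST, Finset.sum_range_succ, hprod]
      simp only [hu]
      simp only [div_eq_mul_inv, mul_inv]
      linear_combination (-((∏ j ∈ Finset.Icc 1 p, (1 - r j * e))⁻¹ * T)) * mul_inv_cancel₀ hlast


theorem stmt_7 (a : ℕ → ℂ) (α β x : ℝ) (hα : α ≠ 0) (p : ℕ) (hp : 1 ≤ p)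
    (r : ℕ → ℂ)
    (hr : ∀ j, 1 ≤ j → j ≤ p → r j * Complex.exp ((α * x) * Complex.I) ≠ 1)
    (S : ℂ)
    (hS : Tendsto (fun N => ∑ n ∈ range N,
      a (n + 1) * Complex.exp (((α * ((n : ℝ) + 1) + β) * x) * Complex.I)) atTop (nhds S)) :
    ∃ T : ℂ,
      Tendsto (fun N => ∑ n ∈ range N,
        Lop r p a (n + 1) *
          Complex.exp (((α * (((n : ℝ) + 1) + (p : ℝ)) + β) * x) * Complex.I)) atTop (nhds T) ∧
      S = a 1 * Complex.exp (((α + β) * x) * Complex.I) /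
            (1 - r 1 * Complex.exp ((α * x) * Complex.I))
        + ∑ k ∈ Finset.Icc 1 (p - 1),
            Lop r k a 1 * Complex.exp (((α * ((k : ℝ) + 1) + β) * x) * Complex.I) /
              ∏ j ∈ Finset.Icc 1 (k + 1), (1 - r j * Complex.exp ((α * x) * Complex.I))
        + (∏ j ∈ Finset.Icc 1 p, (1 - r j * Complex.exp ((α * x) * Complex.I)))⁻¹ * T := by
  set e : ℂ := Complex.exp (((α : ℂ) * x) * Complex.I) with he
  set c : ℂ := Complex.exp (((β : ℂ) * x) * Complex.I) with hc
  have hexp : ∀ m : ℕ, Complex.exp (((α : ℂ) * m + β) * x * Complex.I) = e^m * c := by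
    intro m
    rw [he, hc, ← Complex.exp_nat_mul, ← Complex.exp_add]
    congr 1
    ring
  have hS' : Tendsto (fun N => ∑ n ∈ range N, a (n+1) * e^(n+1) * c) atTop (nhds S) := by
    refine hS.congr (fun N => Finset.sum_congr rfl fun n _ => ?_)
    push_cast
    rw [show ((α : ℂ) * ((n : ℕ) + 1) + β) * x * Complex.I
        = ((α : ℂ) * ((n+1 : ℕ) : ℂ) + β) * x * Complex.I by push_cast; ring, hexp (n+1)]
    ring
  obtain ⟨T, hT, hST⟩ := key a e c r p hr S hS'
  refine ⟨T, ?_, ?_⟩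
  · refine hT.congr (fun N => Finset.sum_congr rfl fun n _ => ?_)
    push_cast
    rw [show ((α : ℂ) * (((n : ℕ) : ℂ) + 1 + ((p : ℕ) : ℂ)) + β) * x * Complex.I
        = ((α : ℂ) * ((n+1+p : ℕ) : ℂ) + β) * x * Complex.I by push_cast; ring, hexp (n+1+p)]
    ring
  · obtain ⟨q, rfl⟩ : ∃ q, p = q + 1 := ⟨p - 1, (Nat.succ_pred_eq_of_pos hp).symm⟩
    rw [hST, Finset.sum_range_succ']
    have h0 : Lop r 0 a 1 * e^(0+1) * c / ∏ j ∈ Finset.Icc 1 (0+1), (1 - r j * e)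
        = a 1 * Complex.exp (((α : ℂ) + β) * x * Complex.I) / (1 - r 1 * e) := by
      push_cast
      rw [show ((α : ℂ) + β) * x * Complex.I = ((α : ℂ) * ((1:ℕ) : ℂ) + β) * x * Complex.I by
          push_cast; ring, hexp 1]
      simp [Lop]
      ring
    have hsum : ∑ k ∈ Finset.Icc 1 (q + 1 - 1),
          Lop r k a 1 * Complex.exp (((α : ℂ) * (((k : ℝ) : ℂ) + 1) + β) * x * Complex.I) /
            ∏ j ∈ Finset.Icc 1 (k + 1), (1 - r j * e)
        = ∑ k ∈ range q, Lop r (k+1) a 1 * e^(k+1+1) * c /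
            ∏ j ∈ Finset.Icc 1 (k+1+1), (1 - r j * e) := by
      rw [show q + 1 - 1 = q from rfl, ← Finset.Ico_add_one_right_eq_Icc, Finset.sum_Ico_eq_sum_range]
      refine Finset.sum_congr (by simp) fun k _ => ?_
      rw [show 1+k = k+1 from Nat.add_comm 1 k]
      push_cast
      rw [show ((α : ℂ) * (((k : ℕ) : ℂ) + 1 + 1) + β) * x * Complex.I
          = ((α : ℂ) * ((k+1+1 : ℕ) : ℂ) + β) * x * Complex.I by push_cast; ring,
        hexp (k+1+1)]
      ring
    rw [h0, hsum]
    ring
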